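/- Keyword auction welfare with window size c is c-local: defining Q_i(π) = 1 − (1−q_i)·∏_{ℓ=max(π(i)−c,1)}^{π(i)−1} (1 − q_{π⁻¹(ℓ)}·w_{π⁻¹(ℓ),i}(π(i)−ℓ)), the social welfare Σ_i v_i·λ_{π(i)}·Q_i(π) can be written as Σ_{p=1}^{n} cost(a_{π⁻¹(p−c)},…,a_{π⁻¹(p)}) for a cost function depending only on the (at most) c+1 consecutive ads at positions p−c,…,p. -/

import Mathlib

theorem stmt_16 (n c : ℕ) (hn : 0 < n)
    (v : Fin n → ℝ) (q : Fin n → ℝ) (lam : Fin n → ℝ)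
    (w : Fin n → Fin n → ℕ → ℝ) :
    ∃ cost : (ℕ → Fin n) → ℕ → ℝ,
      (∀ f g : ℕ → Fin n, ∀ p : ℕ,
          (∀ t : ℕ, p - c ≤ t → t ≤ p → f t = g t) → cost f p = cost g p) ∧
      ∀ π : Equiv.Perm (Fin n),
        (∑ i : Fin n, v i * lam (π i) *
          (1 - (1 - q i) *
            ∏ l ∈ (Finset.Ico ((π i : ℕ) - c) (π i : ℕ)).attach,
              (1 - q (π.symm ⟨l.1, lt_trans (Finset.mem_Ico.mp l.2).2 (π i).isLt⟩) *
                w (π.symm ⟨l.1, lt_trans (Finset.mem_Ico.mp l.2).2 (π i).isLt⟩) i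
                  ((π i : ℕ) - l.1))))
        = ∑ p : Fin n,
            cost (fun t => π.symm ⟨min t (n - 1),
              Nat.lt_of_le_of_lt (Nat.min_le_right t (n - 1)) (Nat.sub_lt hn one_pos)⟩)
              (p : ℕ) := by
  refine ⟨fun f p => if h : p < n then
      v (f p) * lam ⟨p, h⟩ * (1 - (1 - q (f p)) *
        ∏ l ∈ Finset.Ico (p - c) p, (1 - q (f l) * w (f l) (f p) (p - l)))
    else 0, ?_, ?_⟩
  · intro f g p hfg
    beta_reduce
    by_cases h : p < n
    · have hp : f p = g p := hfg p (Nat.sub_le p c) le_rfl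
      rw [dif_pos h, dif_pos h, hp]
      have : ∏ l ∈ Finset.Ico (p - c) p, (1 - q (f l) * w (f l) (g p) (p - l))
          = ∏ l ∈ Finset.Ico (p - c) p, (1 - q (g l) * w (g l) (g p) (p - l)) := by
        apply Finset.prod_congr rfl
        intro l hl
        rw [hfg l (Finset.mem_Ico.mp hl).1 (le_of_lt (Finset.mem_Ico.mp hl).2)]
      rw [this]
    · rw [dif_neg h, dif_neg h]
  · intro π
    apply Fintype.sum_equiv π
    intro i
    beta_reduce
    set p : ℕ := (π i : ℕ) with hp
    have hpn : p < n := (π i).isLt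
    rw [dif_pos hpn]
    have hminp : min p (n - 1) = p := Nat.min_eq_left (Nat.le_sub_one_of_lt hpn)
    have hfp : π.symm ⟨min p (n - 1),
        Nat.lt_of_le_of_lt (Nat.min_le_right p (n - 1)) (Nat.sub_lt hn one_pos)⟩ = i := by
      have : (⟨min p (n - 1),
          Nat.lt_of_le_of_lt (Nat.min_le_right p (n - 1)) (Nat.sub_lt hn one_pos)⟩ : Fin n)
          = π i := by
        apply Fin.ext
        exact hminp
      rw [this, Equiv.symm_apply_apply]
    simp only [← hp, hfp]
    have hmk : (⟨p, hpn⟩ : Fin n) = π i := rfl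
    rw [hmk]
    congr 2
    rw [← Finset.prod_attach (Finset.Ico (p - c) p)
      (fun l => (1 - q (π.symm ⟨min l (n - 1),
        Nat.lt_of_le_of_lt (Nat.min_le_right l (n - 1)) (Nat.sub_lt hn one_pos)⟩) *
        w (π.symm ⟨min l (n - 1),
          Nat.lt_of_le_of_lt (Nat.min_le_right l (n - 1)) (Nat.sub_lt hn one_pos)⟩) i (p - l)))]
    congr 1
    apply Finset.prod_congr rfl
    intro l _
    have hl : l.1 < p := (Finset.mem_Ico.mp l.2).2
    have hminl : min l.1 (n - 1) = l.1 :=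
      Nat.min_eq_left (Nat.le_sub_one_of_lt (lt_trans hl hpn))
    simp only [hminl]
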